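/- Let n ≥ 2, let P be a random vector in the probability simplex Δ^{n−1} ⊂ ℝ^n and Y a random index in {1,…,n} with E[P_Y] = σ. Then E[‖P − e_Y‖²] ≥ (n/(n−1))·(1 − σ)². -/

import Mathlib

open MeasureTheory

lemma pointwise_bound {n : ℕ} (hn : 2 ≤ n) (p : Fin n → ℝ)
    (hsum : ∑ i, p i = 1) (y : Fin n) :
    ((n : ℝ) / ((n : ℝ) - 1)) * (1 - p y) ^ 2
      ≤ ∑ j, (p j - if j = y then 1 else 0) ^ 2 := by
  have hn1 : (0:ℝ) < (n:ℝ) - 1 := by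
    have : (2:ℝ) ≤ (n:ℝ) := by exact_mod_cast hn
    linarith
  have hsplit : ∑ j, (p j - if j = y then 1 else 0) ^ 2
      = (p y - 1)^2 + ∑ j ∈ Finset.univ.erase y, (p j)^2 := by
    rw [← Finset.add_sum_erase _ _ (Finset.mem_univ y)]
    simp only [if_pos rfl]
    congr 1
    apply Finset.sum_congr rfl
    intro j hj
    rw [if_neg (Finset.ne_of_mem_erase hj)]; ring
  have hcard : (Finset.univ.erase y).card = n - 1 := by
    rw [Finset.card_erase_of_mem (Finset.mem_univ y), Finset.card_univ, Fintype.card_fin]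
  have hes : ∑ j ∈ Finset.univ.erase y, p j = 1 - p y := by
    have := Finset.add_sum_erase Finset.univ p (Finset.mem_univ y)
    rw [hsum] at this
    linarith
  have hcs := sq_sum_le_card_mul_sum_sq (s := Finset.univ.erase y) (f := p)
  rw [hes, hcard] at hcs
  have hcardR : ((n - 1 : ℕ) : ℝ) = (n:ℝ) - 1 := by
    have : 1 ≤ n := by omega
    push_cast [this]; ring
  rw [hcardR] at hcs
  have h2 : (1 - p y)^2 / ((n:ℝ) - 1) ≤ ∑ j ∈ Finset.univ.erase y, (p j)^2 := by
    rw [div_le_iff₀ hn1]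
    linarith [hcs]
  rw [hsplit]
  have : (p y - 1)^2 = (1 - p y)^2 := by ring
  rw [this]
  have key : ((n : ℝ) / ((n : ℝ) - 1)) * (1 - p y) ^ 2
      = (1 - p y)^2 + (1 - p y)^2 / ((n:ℝ) - 1) := by
    field_simp; ring
  linarith [key, h2]

/-- For n ≥ 2, a random vector P in the probability simplex and random
index Y with E[P_Y] = σ, we have E[‖P − e_Y‖²] ≥ (n/(n−1))(1 − σ)². -/
theorem ce_grad_norm_lower {Ω : Type*} [MeasurableSpace Ω] (μ : Measure Ω)
    [IsProbabilityMeasure μ] (n : ℕ) (hn : 2 ≤ n) (σ : ℝ)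
    (P : Ω → Fin n → ℝ) (Y : Ω → Fin n)
    (hnonneg : ∀ ω i, 0 ≤ P ω i) (hsum : ∀ ω, ∑ i, P ω i = 1)
    (hiPY : Integrable (fun ω => P ω (Y ω)) μ)
    (hi : Integrable (fun ω => ∑ j, (P ω j - if j = Y ω then 1 else 0) ^ 2) μ)
    (hPY : ∫ ω, P ω (Y ω) ∂μ = σ) :
    ((n : ℝ) / ((n : ℝ) - 1)) * (1 - σ) ^ 2
      ≤ ∫ ω, ∑ j, (P ω j - if j = Y ω then 1 else 0) ^ 2 ∂μ := by
  have hn1 : (0:ℝ) < (n:ℝ) - 1 := by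
    have : (2:ℝ) ≤ (n:ℝ) := by exact_mod_cast hn
    linarith
  have hc : (0:ℝ) ≤ (n : ℝ) / ((n : ℝ) - 1) := by positivity
  set X : Ω → ℝ := fun ω => 1 - P ω (Y ω) with hX
  have hpt : ∀ ω, ((n : ℝ) / ((n : ℝ) - 1)) * (X ω) ^ 2
      ≤ ∑ j, (P ω j - if j = Y ω then 1 else 0) ^ 2 :=
    fun ω => pointwise_bound hn (P ω) (hsum ω) (Y ω)
  have hXint : Integrable X μ := (integrable_const 1).sub hiPY
  have hEX : ∫ ω, X ω ∂μ = 1 - σ := by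
    simp only [hX]
    rw [integral_sub (integrable_const 1) hiPY, hPY, integral_const]
    simp
  -- integrability of c * X^2
  have hiSq : Integrable (fun ω => ((n : ℝ) / ((n : ℝ) - 1)) * X ω ^ 2) μ := by
    apply hi.mono
    · exact (aestronglyMeasurable_const.mul
        (hXint.aestronglyMeasurable.pow 2)) |>.congr (by rfl)
    · filter_upwards with ω
      have h1 : 0 ≤ ((n : ℝ) / ((n : ℝ) - 1)) * X ω ^ 2 := by positivity
      have h2 : 0 ≤ ∑ j, (P ω j - if j = Y ω then 1 else 0) ^ 2 :=
        Finset.sum_nonneg fun j _ => sq_nonneg _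
      rw [Real.norm_eq_abs, Real.norm_eq_abs, abs_of_nonneg h1, abs_of_nonneg h2]
      exact hpt ω
  have hiX2 : Integrable (fun ω => X ω ^ 2) μ := by
    have := hiSq.const_mul (((n : ℝ) - 1) / (n : ℝ))
    convert this using 2 with ω
    field_simp
  have hmem : MemLp X 2 μ := by
    rw [memLp_two_iff_integrable_sq hXint.aestronglyMeasurable]
    exact hiX2
  have hvar := ProbabilityTheory.variance_nonneg X μ
  rw [ProbabilityTheory.variance_eq_sub hmem] at hvar
  have hE2 : (∫ ω, X ω ∂μ) ^ 2 ≤ ∫ ω, X ω ^ 2 ∂μ := by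
    simp only [Pi.pow_apply] at hvar
    linarith [hvar]
  calc ((n : ℝ) / ((n : ℝ) - 1)) * (1 - σ) ^ 2
      = ((n : ℝ) / ((n : ℝ) - 1)) * (∫ ω, X ω ∂μ) ^ 2 := by rw [hEX]
    _ ≤ ((n : ℝ) / ((n : ℝ) - 1)) * ∫ ω, X ω ^ 2 ∂μ := by
        exact mul_le_mul_of_nonneg_left hE2 hc
    _ = ∫ ω, ((n : ℝ) / ((n : ℝ) - 1)) * X ω ^ 2 ∂μ := (integral_const_mul _ _).symm
    _ ≤ ∫ ω, ∑ j, (P ω j - if j = Y ω then 1 else 0) ^ 2 ∂μ :=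
        integral_mono hiSq hi fun ω => hpt ω
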